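/- arXiv:2004.07445 — 2 statements merged into one kernel-verified Lean document; each statement's English description precedes it below -/
import Mathlib

section
/- Let G be a group and F : G → ℝ a function satisfying: (i) |F(ab) − F(a) − F(b)| ≤ 1 for all a, b; (ii) there is a central element t with F(tφ) = F(φ) + 1 for all φ. Suppose h₁, …, h_m ∈ G with F(hᵢ) = 0 for all i, and let β = t^d · (h_m ⋯ h₁) for an integer d ≥ 0. Then d ≤ F(β) + m − 1 ≤ d + 2(m − 1), and in particular if m = 1 then F(β) = d. -/
private lemma aux_pow {G : Type*} [Group G] (F : G → ℝ) (t : G)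
    (htw : ∀ φ : G, F (t * φ) = F φ + 1) (d : ℕ) (x : G) :
    F (t ^ d * x) = F x + d := by
  induction d with
  | zero => simp
  | succ n ih =>
    have : t ^ (n + 1) * x = t * (t ^ n * x) := by
      rw [pow_succ', mul_assoc]
    rw [this, htw, ih]
    push_cast; ring

private lemma aux_prod {G : Type*} [Group G] (F : G → ℝ)
    (hquasi : ∀ a b : G, |F (a * b) - F a - F b| ≤ 1) :
    ∀ (L : List G), L ≠ [] → (∀ x ∈ L, F x = 0) → |F L.prod| ≤ (L.length : ℝ) - 1 := by
  intro L
  induction L with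
  | nil => intro hne; exact absurd rfl hne
  | cons a l ih =>
    intro _ hz
    rcases l with _ | ⟨b, l'⟩
    · simp [hz a (by simp)]
    · set l := b :: l' with hl
      have hne : l ≠ [] := by simp [hl]
      have hzl : ∀ x ∈ l, F x = 0 := fun x hx => hz x (List.mem_cons_of_mem _ hx)
      have h1 := ih hne hzl
      have h2 := hquasi a l.prod
      have ha : F a = 0 := hz a (by simp)
      have : |F (a * l.prod)| ≤ 1 + |F l.prod| := by
        calc |F (a * l.prod)| = |(F (a * l.prod) - F a - F l.prod) + F l.prod| := by
              rw [ha]; ring_nf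
          _ ≤ |F (a * l.prod) - F a - F l.prod| + |F l.prod| := abs_add_le _ _
          _ ≤ 1 + |F l.prod| := by linarith
      rw [List.prod_cons]
      have hlen : ((a :: l).length : ℝ) = (l.length : ℝ) + 1 := by push_cast [List.length_cons]; ring
      rw [hlen]
      linarith

/-- If F is a quasimorphism of defect ≤ 1 with a central element t satisfying
F(tφ) = F(φ) + 1, and β = t^d · (h_m ⋯ h₁) with F(hᵢ) = 0 for all i, then
d ≤ F(β) + m − 1 ≤ d + 2(m − 1); if moreover m = 1 then F(β) = d. -/
theorem stmt16 {G : Type*} [Group G] (F : G → ℝ)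
    (hquasi : ∀ a b : G, |F (a * b) - F a - F b| ≤ 1)
    (t : G) (ht : ∀ g : G, t * g = g * t)
    (htw : ∀ φ : G, F (t * φ) = F φ + 1)
    (m : ℕ) (hm : 1 ≤ m) (h : Fin m → G) (hzero : ∀ i, F (h i) = 0)
    (d : ℕ) (β : G) (hβ : β = t ^ d * ((List.finRange m).reverse.map h).prod) :
    ((d : ℝ) ≤ F β + (m : ℝ) - 1 ∧ F β + (m : ℝ) - 1 ≤ (d : ℝ) + 2 * ((m : ℝ) - 1)) ∧
      (m = 1 → F β = d) := by
  set L := ((List.finRange m).reverse.map h) with hL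
  have hlen : L.length = m := by simp [hL]
  have hne : L ≠ [] := by
    intro hc
    have := congrArg List.length hc
    simp [hlen] at this
    omega
  have hz : ∀ x ∈ L, F x = 0 := by
    intro x hx
    simp only [hL, List.mem_map] at hx
    obtain ⟨i, _, rfl⟩ := hx
    exact hzero i
  have hFβ : F β = F L.prod + d := by rw [hβ]; exact aux_pow F t htw d L.prod
  have habs := aux_prod F hquasi L hne hz
  rw [hlen] at habs
  have h1 : -((m : ℝ) - 1) ≤ F L.prod := by
    have := abs_le.mp habs; linarith [this.1]
  have h2 : F L.prod ≤ (m : ℝ) - 1 := (abs_le.mp habs).2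
  refine ⟨⟨by linarith, by linarith⟩, ?_⟩
  intro hm1
  subst hm1
  have : F L.prod = 0 := by
    have hm' : (1 : ℝ) - 1 = 0 := by ring
    have := abs_le.mp habs
    push_cast at this
    have := abs_nonneg (F L.prod)
    nlinarith [(abs_le.mp habs).1, (abs_le.mp habs).2, abs_nonneg (F L.prod), le_abs_self (F L.prod), neg_abs_le (F L.prod)]
  linarith
end

section
/- In the braid group Bₙ (n ≥ 2), for each generator σᵢ the element Δ²σᵢ⁻¹ lies in the submonoid generated by the positive generators σ₁, …, σ_{n-1} (i.e., it can be written as a positive braid word). -/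
/-- The Artin relations for the braid group with generators σ₀, …, σ_{m-1}
(i.e. the braid group on m+1 strands):
σᵢσⱼ = σⱼσᵢ for |i−j| ≥ 2 and σᵢσᵢ₊₁σᵢ = σᵢ₊₁σᵢσᵢ₊₁. -/
def braidRels (m : ℕ) : Set (FreeGroup (Fin m)) :=
  { r | (∃ i j : Fin m, (i : ℕ) + 2 ≤ (j : ℕ) ∧
          r = FreeGroup.of i * FreeGroup.of j * (FreeGroup.of j * FreeGroup.of i)⁻¹) ∨
        (∃ i j : Fin m, (i : ℕ) + 1 = (j : ℕ) ∧
          r = FreeGroup.of i * FreeGroup.of j * FreeGroup.of i *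
                (FreeGroup.of j * FreeGroup.of i * FreeGroup.of j)⁻¹) }

/-- The braid group Bₙ on n strands, with generators σ₀, …, σ_{n-2}. -/
abbrev BraidGroup (n : ℕ) := PresentedGroup (braidRels (n - 1))

/-- The product σ₁σ₂⋯σ_{n-1} of all the Artin generators of Bₙ, in order. -/
def deltaWord (n : ℕ) : BraidGroup n :=
  ((List.finRange (n - 1)).map
    (fun i => (PresentedGroup.of i : BraidGroup n))).prod

/-- The full twist Δ² = (σ₁σ₂⋯σ_{n-1})ⁿ in Bₙ. -/
def fullTwist (n : ℕ) : BraidGroup n := deltaWord n ^ n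


lemma braid_rel_one (n : ℕ) {r : FreeGroup (Fin (n-1))} (hr : r ∈ braidRels (n-1)) :
    (PresentedGroup.mk _ r : BraidGroup n) = 1 :=
  (QuotientGroup.eq_one_iff r).2 (Subgroup.subset_normalClosure hr)

noncomputable def sgen (n : ℕ) (k : ℕ) : BraidGroup n :=
  if h : k < n - 1 then (PresentedGroup.of ⟨k, h⟩ : BraidGroup n) else 1

lemma sgen_comm (n : ℕ) {a b : ℕ} (h : a + 2 ≤ b) :
    sgen n a * sgen n b = sgen n b * sgen n a := by
  by_cases hb : b < n - 1
  · have ha : a < n - 1 := by omega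
    simp only [sgen, dif_pos ha, dif_pos hb]
    have h1 := braid_rel_one n (r := FreeGroup.of (⟨a, ha⟩ : Fin (n-1)) * FreeGroup.of ⟨b, hb⟩ *
      (FreeGroup.of ⟨b, hb⟩ * FreeGroup.of ⟨a, ha⟩)⁻¹)
      (Or.inl ⟨⟨a, ha⟩, ⟨b, hb⟩, h, rfl⟩)
    simp only [map_mul, map_inv] at h1
    exact mul_inv_eq_one.mp h1
  · simp [sgen, dif_neg hb]

lemma sgen_braid (n : ℕ) {a : ℕ} (h : a + 1 < n - 1) :
    sgen n a * sgen n (a+1) * sgen n a = sgen n (a+1) * sgen n a * sgen n (a+1) := by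
  have ha : a < n - 1 := by omega
  simp only [sgen, dif_pos ha, dif_pos h]
  have h1 := braid_rel_one n (r := FreeGroup.of (⟨a, ha⟩ : Fin (n-1)) * FreeGroup.of ⟨a+1, h⟩ *
      FreeGroup.of ⟨a, ha⟩ *
      (FreeGroup.of ⟨a+1, h⟩ * FreeGroup.of ⟨a, ha⟩ * FreeGroup.of ⟨a+1, h⟩)⁻¹)
    (Or.inr ⟨⟨a, ha⟩, ⟨a+1, h⟩, rfl, rfl⟩)
  simp only [map_mul, map_inv] at h1
  exact mul_inv_eq_one.mp h1

noncomputable def Pword (n t : ℕ) : BraidGroup n := ((List.range t).map (sgen n)).prod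

lemma Pword_succ (n t : ℕ) : Pword n (t+1) = Pword n t * sgen n t := by
  simp [Pword, List.range_succ]

lemma sgen_comm_list (n : ℕ) (j : ℕ) (L : List ℕ) (hL : ∀ x ∈ L, j + 2 ≤ x) :
    (L.map (sgen n)).prod * sgen n j = sgen n j * (L.map (sgen n)).prod := by
  induction L with
  | nil => simp
  | cons a L ih =>
    have ha := hL a (by simp)
    have ih' := ih (fun x hx => hL x (by simp [hx]))
    simp only [List.map_cons, List.prod_cons]
    rw [mul_assoc, ih', ← mul_assoc, ← sgen_comm n ha, mul_assoc]

lemma sgen_comm_list' (n : ℕ) (k : ℕ) (L : List ℕ) (hL : ∀ x ∈ L, x + 2 ≤ k) :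
    sgen n k * (L.map (sgen n)).prod = (L.map (sgen n)).prod * sgen n k := by
  induction L with
  | nil => simp
  | cons a L ih =>
    have ha := hL a (by simp)
    have ih' := ih (fun x hx => hL x (by simp [hx]))
    simp only [List.map_cons, List.prod_cons]
    rw [← mul_assoc, ← sgen_comm n ha, mul_assoc, ih', mul_assoc]

lemma Pword_split (n j : ℕ) (hj : j + 1 < n - 1) :
    ∃ Q : BraidGroup n,
      Pword n (n-1) = Pword n j * sgen n j * sgen n (j+1) * Q ∧
      (Q * sgen n j = sgen n j * Q) := by
  have hrange : List.range (n-1)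
      = List.range (j+2) ++ (List.range ((n-1)-(j+2))).map (fun t => (j+2)+t) := by
    rw [← List.range_add]
    congr 1
    omega
  refine ⟨(((List.range ((n-1)-(j+2))).map (fun t => (j+2)+t)).map (sgen n)).prod, ?_, ?_⟩
  · unfold Pword
    rw [hrange, List.map_append, List.prod_append]
    congr 1
    rw [show j + 2 = j + 1 + 1 by ring, List.range_succ, List.range_succ,
      List.map_append, List.map_append, List.prod_append, List.prod_append]
    simp [mul_assoc]
  · exact sgen_comm_list n j _ (by intro x hx; simp at hx; omega)

lemma delta_conj (n j : ℕ) (hj : j + 1 < n - 1) :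
    Pword n (n-1) * sgen n j = sgen n (j+1) * Pword n (n-1) := by
  obtain ⟨Q, hQ, hcomm⟩ := Pword_split n j hj
  have hPj : sgen n (j+1) * Pword n j = Pword n j * sgen n (j+1) :=
    sgen_comm_list' n (j+1) _ (by intro x hx; simp at hx; omega)
  have hb := sgen_braid n hj
  calc Pword n (n-1) * sgen n j
      = Pword n j * sgen n j * sgen n (j+1) * Q * sgen n j := by rw [hQ]
    _ = Pword n j * (sgen n j * sgen n (j+1) * sgen n j) * Q := by
        rw [mul_assoc _ Q, hcomm]; group
    _ = Pword n j * (sgen n (j+1) * sgen n j * sgen n (j+1)) * Q := by rw [hb]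
    _ = (Pword n j * sgen n (j+1)) * (sgen n j * sgen n (j+1) * Q) := by group
    _ = sgen n (j+1) * (Pword n j * sgen n j * sgen n (j+1) * Q) := by
        rw [← hPj]; group
    _ = sgen n (j+1) * Pword n (n-1) := by rw [hQ]

lemma delta_pow_conj (n : ℕ) (i k : ℕ) (hk : i + k ≤ n - 2) :
    (Pword n (n-1)) ^ k * sgen n i = sgen n (i+k) * (Pword n (n-1)) ^ k := by
  induction k generalizing i with
  | zero => simp
  | succ k ih =>
    have h1 : (Pword n (n-1)) ^ (k+1) * sgen n i
        = (Pword n (n-1)) ^ k * (Pword n (n-1) * sgen n i) := by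
      rw [pow_succ]; group
    rw [h1, delta_conj n i (by omega), ← mul_assoc, ih (i+1) (by omega)]
    rw [show i + 1 + k = i + (k+1) by ring, pow_succ]
    group

/-- For n ≥ 2 and each Artin generator σᵢ of Bₙ, the element Δ²σᵢ⁻¹ lies in the
submonoid generated by the positive generators, i.e. it is a positive braid. -/
theorem fullTwist_mul_inv_gen_positive (n : ℕ) (hn : 2 ≤ n) (i : Fin (n - 1)) :
    fullTwist n * (PresentedGroup.of i : BraidGroup n)⁻¹ ∈
      Submonoid.closure (Set.range (fun j : Fin (n - 1) =>
        (PresentedGroup.of j : BraidGroup n))) := by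
  set M := Submonoid.closure (Set.range (fun j : Fin (n - 1) =>
      (PresentedGroup.of j : BraidGroup n))) with hM
  have hsmem : ∀ k, sgen n k ∈ M := by
    intro k
    by_cases h : k < n - 1
    · exact Submonoid.subset_closure ⟨⟨k, h⟩, by simp [sgen, dif_pos h]⟩
    · simp only [sgen, dif_neg h]; exact one_mem M
  have hPmem : ∀ t, Pword n t ∈ M := by
    intro t
    exact Submonoid.list_prod_mem _ (by
      intro x hx
      simp only [List.mem_map] at hx
      obtain ⟨k, _, rfl⟩ := hx
      exact hsmem k)
  have hdelta : deltaWord n = Pword n (n-1) := by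
    unfold deltaWord Pword
    congr 1
    rw [← List.map_coe_finRange_eq_range (n := n-1), List.map_map]
    apply List.map_congr_left
    intro a _
    simp [sgen, a.isLt, Function.comp]
  have hsof : (PresentedGroup.of i : BraidGroup n) = sgen n i := by
    simp [sgen, i.isLt]
  have hiv : (i : ℕ) < n - 1 := i.isLt
  obtain ⟨k, hk⟩ : ∃ k, k = n - 2 - (i : ℕ) := ⟨_, rfl⟩
  have hik : (i : ℕ) + k = n - 2 := by omega
  have hconj : (Pword n (n-1)) ^ k * sgen n i = sgen n (n-2) * (Pword n (n-1)) ^ k := by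
    have := delta_pow_conj n i k (by omega)
    rwa [hik] at this
  have hsplit : Pword n (n-1) = Pword n (n-2) * sgen n (n-2) := by
    have h1 : n - 1 = (n-2) + 1 := by omega
    exact (congrArg (Pword n) h1).trans (Pword_succ n (n-2))
  have hinv : (sgen n i)⁻¹
      = ((Pword n (n-1)) ^ k)⁻¹ * (sgen n (n-2))⁻¹ * (Pword n (n-1)) ^ k := by
    have h1 : sgen n i = ((Pword n (n-1)) ^ k)⁻¹ * (sgen n (n-2) * (Pword n (n-1)) ^ k) :=
      eq_inv_mul_iff_mul_eq.2 hconj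
    rw [h1]; group
  have hpow : (Pword n (n-1)) ^ n = (Pword n (n-1)) ^ (k+1) * (Pword n (n-1)) ^ ((i:ℕ)+1) := by
    rw [← pow_add]
    congr 1
    omega
  have key : fullTwist n * (PresentedGroup.of i : BraidGroup n)⁻¹
      = (Pword n (n-1)) ^ ((i:ℕ)+1) * (Pword n (n-1) * (sgen n (n-2))⁻¹)
        * (Pword n (n-1)) ^ k := by
    rw [fullTwist, hdelta, hsof, hinv, hpow]
    group
  have hcancel : Pword n (n-1) * (sgen n (n-2))⁻¹ = Pword n (n-2) := by
    rw [hsplit]; group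
  rw [key, hcancel]
  exact mul_mem (mul_mem (pow_mem (hPmem _) _) (hPmem _)) (pow_mem (hPmem _) _)
end
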